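/- Let ψ ∈ L²(ℝ^ν), ψ ≠ 0, and ε > 0 with ‖𝟙_{|x| ≥ 2ε} ψ‖ > 0. For α > 0, 0 < β < 1, set ψ_F = e^{α⟨x⟩^β} ψ ∈ L² and Ψ_α = ψ_F/‖ψ_F‖. Then there exist constants C₁ > 0 and α₀ > 0 such that for all α ≥ α₀, ⟨Ψ_α, (1 - ⟨q⟩^{-2}) Ψ_α⟩ ≥ C₁. -/

import Mathlib

open MeasureTheory Real

noncomputable section

/-- Japanese bracket ⟨x⟩ = (1+|x|²)^{1/2}. -/
def jap {ν : ℕ} (x : EuclideanSpace ℝ (Fin ν)) : ℝ := Real.sqrt (1 + ‖x‖ ^ 2)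

lemma integrable_sq_of_memL2 {ν : ℕ} {f : EuclideanSpace ℝ (Fin ν) → ℂ}
    (hf : MemLp f 2 volume) : Integrable (fun x => ‖f x‖ ^ 2) volume := by
  have h := hf.integrable_norm_rpow (by norm_num) (by norm_num)
  have h2 : ∀ x : EuclideanSpace ℝ (Fin ν),
      ‖f x‖ ^ ((2 : ENNReal).toReal) = ‖f x‖ ^ 2 := by
    intro x
    rw [ENNReal.toReal_ofNat, show ((2:ℝ)) = ((2:ℕ):ℝ) by norm_num, Real.rpow_natCast]
  simpa only [h2] using h

/-- For ψ ≠ 0 in L² with nonvanishing tail, and Ψ_α the normalization of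
ψ_F = e^{α⟨x⟩^β}ψ, there are C₁ > 0 and α₀ > 0 such that for all α ≥ α₀,
⟨Ψ_α, (1-⟨q⟩^{-2})Ψ_α⟩ ≥ C₁. -/
theorem lower_bound_weighted_expectation {ν : ℕ}
    (ψ : EuclideanSpace ℝ (Fin ν) → ℂ) (hψ : MemLp ψ 2 volume)
    (hψ0 : ψ ≠ 0) (ε : ℝ) (hε : 0 < ε)
    (htail : 0 < ∫ x in {x : EuclideanSpace ℝ (Fin ν) | 2 * ε ≤ ‖x‖}, ‖ψ x‖ ^ 2)
    (β : ℝ) (hβ0 : 0 < β) (hβ1 : β < 1)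
    (ψF : ℝ → EuclideanSpace ℝ (Fin ν) → ℂ)
    (hψF : ∀ α x, ψF α x = Real.exp (α * (jap x) ^ β) * ψ x)
    (hψFL2 : ∀ α > 0, MemLp (ψF α) 2 volume) :
    ∃ C₁ > 0, ∃ α₀ > 0, ∀ α ≥ α₀,
      C₁ ≤ (∫ x, (1 - ((1 : ℝ) + ‖x‖ ^ 2)⁻¹) * ‖ψF α x‖ ^ 2) /
        (∫ x, ‖ψF α x‖ ^ 2) := by
  classical
  set S : Set (EuclideanSpace ℝ (Fin ν)) := {x | 2 * ε ≤ ‖x‖} with hSdef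
  have hS : MeasurableSet S := (isClosed_le continuous_const continuous_norm).measurableSet
  have hψ2 : Integrable (fun x => ‖ψ x‖ ^ 2) := integrable_sq_of_memL2 hψ
  set A : ℝ := ∫ x in Sᶜ, ‖ψ x‖ ^ 2 with hAdef
  set B : ℝ := ∫ x in S, ‖ψ x‖ ^ 2 with hBdef
  have hB : 0 < B := htail
  have hA : 0 ≤ A := setIntegral_nonneg hS.compl (fun x _ => by positivity)
  set J : ℝ := Real.sqrt (1 + (2 * ε) ^ 2) with hJdef
  set c : ℝ := 1 - (1 + (2 * ε) ^ 2)⁻¹ with hcdef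
  have hc : 0 < c := by
    have h1 : (1 : ℝ) < 1 + (2 * ε) ^ 2 := by nlinarith
    have h2 : (1 + (2 * ε) ^ 2)⁻¹ < 1 := by
      rw [inv_lt_one_iff₀]; right; exact h1
    simp only [hcdef]; linarith
  have hAB : 0 < A + B := by linarith
  refine ⟨c * B / (A + B), div_pos (mul_pos hc hB) hAB, 1, one_pos, ?_⟩
  intro α hα
  have hα0 : 0 < α := lt_of_lt_of_le one_pos hα
  have hgint : Integrable (fun x => ‖ψF α x‖ ^ 2) :=
    integrable_sq_of_memL2 (hψFL2 α hα0)
  have hgx : ∀ x, ‖ψF α x‖ ^ 2 = Real.exp (2 * α * (jap x) ^ β) * ‖ψ x‖ ^ 2 := by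
    intro x
    rw [hψF]
    simp only [norm_mul, Complex.norm_real, Real.norm_eq_abs,
      abs_of_pos (Real.exp_pos _)]
    rw [mul_pow, sq (Real.exp _), ← Real.exp_add]
    ring_nf
  set E : ℝ := Real.exp (2 * α * J ^ β) with hEdef
  have hE : 0 < E := Real.exp_pos _
  -- exponential comparison on S and Sᶜ
  have hexpS : ∀ x ∈ S, E ≤ Real.exp (2 * α * (jap x) ^ β) := by
    intro x hx
    apply Real.exp_le_exp.mpr
    apply mul_le_mul_of_nonneg_left _ (by positivity)
    apply Real.rpow_le_rpow (Real.sqrt_nonneg _) _ hβ0.le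
    apply Real.sqrt_le_sqrt
    have hx' : 2 * ε ≤ ‖x‖ := hx
    nlinarith [norm_nonneg x]
  have hexpSc : ∀ x ∈ Sᶜ, Real.exp (2 * α * (jap x) ^ β) ≤ E := by
    intro x hx
    apply Real.exp_le_exp.mpr
    apply mul_le_mul_of_nonneg_left _ (by positivity)
    apply Real.rpow_le_rpow (Real.sqrt_nonneg _) _ hβ0.le
    apply Real.sqrt_le_sqrt
    have hx' : ‖x‖ < 2 * ε := by
      simpa [hSdef, not_le] using hx
    nlinarith [norm_nonneg x]
  -- integrability of weighted integrand
  have hwcont : Continuous (fun x : EuclideanSpace ℝ (Fin ν) =>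
      1 - ((1 : ℝ) + ‖x‖ ^ 2)⁻¹) := by
    apply continuous_const.sub
    exact (continuous_const.add ((continuous_norm).pow 2)).inv₀ (fun x => ne_of_gt (show (0:ℝ) < 1 + ‖x‖ ^ 2 by positivity))
  have hw01 : ∀ x : EuclideanSpace ℝ (Fin ν),
      0 ≤ 1 - ((1 : ℝ) + ‖x‖ ^ 2)⁻¹ ∧ 1 - ((1 : ℝ) + ‖x‖ ^ 2)⁻¹ ≤ 1 := by
    intro x
    constructor
    · have : ((1 : ℝ) + ‖x‖ ^ 2)⁻¹ ≤ 1 := by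
        rw [inv_le_one_iff₀]; right; nlinarith [norm_nonneg x]
      linarith
    · have : (0:ℝ) < ((1 : ℝ) + ‖x‖ ^ 2)⁻¹ := by positivity
      linarith
  have hwg_int : Integrable (fun x => (1 - ((1 : ℝ) + ‖x‖ ^ 2)⁻¹) * ‖ψF α x‖ ^ 2) := by
    apply hgint.bdd_mul (c := 1) hwcont.aestronglyMeasurable
    exact Filter.Eventually.of_forall (fun x => by
      rw [Real.norm_eq_abs, abs_of_nonneg (hw01 x).1]; exact (hw01 x).2)
  -- step 1: restrict numerator to S
  have h1 : ∫ x in S, (1 - ((1 : ℝ) + ‖x‖ ^ 2)⁻¹) * ‖ψF α x‖ ^ 2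
      ≤ ∫ x, (1 - ((1 : ℝ) + ‖x‖ ^ 2)⁻¹) * ‖ψF α x‖ ^ 2 := by
    apply setIntegral_le_integral hwg_int
    filter_upwards with x
    exact mul_nonneg (hw01 x).1 (by positivity)
  -- step 2: weight ≥ c on S
  have h2 : c * ∫ x in S, ‖ψF α x‖ ^ 2
      ≤ ∫ x in S, (1 - ((1 : ℝ) + ‖x‖ ^ 2)⁻¹) * ‖ψF α x‖ ^ 2 := by
    rw [← integral_const_mul]
    apply setIntegral_mono_on ((hgint.const_mul c).integrableOn)
      (hwg_int.integrableOn) hS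
    intro x hx
    have hx' : 2 * ε ≤ ‖x‖ := hx
    have hcw : c ≤ 1 - ((1 : ℝ) + ‖x‖ ^ 2)⁻¹ := by
      have hle : ((1 : ℝ) + ‖x‖ ^ 2)⁻¹ ≤ (1 + (2 * ε) ^ 2)⁻¹ := by
        apply inv_anti₀ (by positivity)
        nlinarith [norm_nonneg x]
      simp only [hcdef]; linarith
    exact mul_le_mul_of_nonneg_right hcw (by positivity)
  -- step 3: tail lower bound
  have h3 : E * B ≤ ∫ x in S, ‖ψF α x‖ ^ 2 := by
    rw [hBdef, ← integral_const_mul]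
    apply setIntegral_mono_on ((hψ2.const_mul E).integrableOn)
      (hgint.integrableOn) hS
    intro x hx
    rw [hgx]
    exact mul_le_mul_of_nonneg_right (hexpS x hx) (by positivity)
  -- step 4: complement upper bound
  have h4 : ∫ x in Sᶜ, ‖ψF α x‖ ^ 2 ≤ E * A := by
    rw [hAdef, ← integral_const_mul]
    apply setIntegral_mono_on (hgint.integrableOn)
      ((hψ2.const_mul E).integrableOn) hS.compl
    intro x hx
    rw [hgx]
    exact mul_le_mul_of_nonneg_right (hexpSc x hx) (by positivity)
  set T : ℝ := ∫ x in S, ‖ψF α x‖ ^ 2 with hTdef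
  have hTpos : 0 < T := lt_of_lt_of_le (mul_pos hE hB) h3
  have hDsplit : (∫ x, ‖ψF α x‖ ^ 2) = T + ∫ x in Sᶜ, ‖ψF α x‖ ^ 2 :=
    (integral_add_compl hS hgint).symm
  have hScnn : 0 ≤ ∫ x in Sᶜ, ‖ψF α x‖ ^ 2 :=
    setIntegral_nonneg hS.compl (fun x _ => by positivity)
  have hD : 0 < ∫ x, ‖ψF α x‖ ^ 2 := by rw [hDsplit]; linarith
  rw [div_le_div_iff₀ hAB hD]
  -- final chain
  have hDle : (∫ x, ‖ψF α x‖ ^ 2) ≤ T + E * A := by rw [hDsplit]; linarith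
  have hNge : c * T ≤ ∫ x, (1 - ((1 : ℝ) + ‖x‖ ^ 2)⁻¹) * ‖ψF α x‖ ^ 2 :=
    le_trans h2 h1
  have hkey : c * B * (T + E * A) ≤ c * T * (A + B) := by
    nlinarith [mul_nonneg (mul_nonneg hc.le hA) (sub_nonneg.2 h3)]
  calc c * B * ∫ x, ‖ψF α x‖ ^ 2
      ≤ c * B * (T + E * A) := by
        exact mul_le_mul_of_nonneg_left hDle (mul_nonneg hc.le hB.le)
    _ ≤ c * T * (A + B) := hkey
    _ ≤ (∫ x, (1 - ((1 : ℝ) + ‖x‖ ^ 2)⁻¹) * ‖ψF α x‖ ^ 2) * (A + B) := by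
        exact mul_le_mul_of_nonneg_right hNge hAB.le
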